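/- Let f : [0,1] → X be a continuous surjection onto a compact metric space X, and let μ be a finite (nonnegative) Borel measure on X. Then there exists a finite signed Borel measure μ̃ on [0,1] whose pushforward along f equals μ, i.e. μ̃(f⁻¹(A)) = μ(A) for every Borel set A ⊆ X. -/

import Mathlib

open MeasureTheory

/-- Lifting a finite Borel measure along a continuous surjection `[0,1] → X`:
there is a finite signed Borel measure on `[0,1]` pushing forward to `μ`. -/
theorem exists_lift_measure_along_surjection {X : Type*} [MetricSpace X] [CompactSpace X]
    [MeasurableSpace X] [BorelSpace X]
    (f : unitInterval → X) (hf : Continuous f) (hsurj : Function.Surjective f)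
    (μ : Measure X) [IsFiniteMeasure μ] :
    ∃ μt : SignedMeasure unitInterval,
      ∀ A : Set X, MeasurableSet A → μt (f ⁻¹' A) = (μ A).toReal := by
  -- the fibers of `f`, viewed as subsets of `ℝ`
  set S : X → Set ℝ := fun x => Subtype.val '' (f ⁻¹' {x}) with hS
  have hSne : ∀ x, (S x).Nonempty := fun x => by
    obtain ⟨t, ht⟩ := hsurj x
    exact ⟨t, ⟨t, ht, rfl⟩⟩
  have hScpt : ∀ x, IsCompact (S x) := fun x =>
    ((isClosed_singleton.preimage hf).isCompact).image continuous_subtype_val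
  -- the infimum of each fiber is attained
  have hmem : ∀ x, sInf (S x) ∈ S x := fun x => (hScpt x).sInf_mem (hSne x)
  -- a section `g` of `f`, sending `x` to the least element of its fiber
  choose g hg hgval using fun x => hmem x
  have hfg : ∀ x, f (g x) = x := fun x => hg x
  -- measurability of `g` : sublevel sets of `x ↦ sInf (S x)` are images of compacts
  have hval : ∀ a : ℝ, {x | (g x : ℝ) ≤ a} = f '' (Subtype.val ⁻¹' Set.Iic a) := by
    intro a
    ext x
    constructor
    · intro hx
      exact ⟨g x, hx, hfg x⟩
    · rintro ⟨t, ht, rfl⟩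
      calc (g (f t) : ℝ) = sInf (S (f t)) := hgval (f t)
        _ ≤ (t : ℝ) := csInf_le (hScpt (f t)).bddBelow ⟨t, rfl, rfl⟩
        _ ≤ a := ht
  have hvalmeas : Measurable fun x => (g x : ℝ) := by
    apply measurable_of_Iic
    intro a
    have : (fun x => (g x : ℝ)) ⁻¹' Set.Iic a = f '' (Subtype.val ⁻¹' Set.Iic a) := hval a
    rw [this]
    have hcpt : IsCompact (Subtype.val ⁻¹' Set.Iic a : Set unitInterval) :=
      (isClosed_Iic.preimage continuous_subtype_val).isCompact
    exact ((hcpt.image hf).isClosed).measurableSet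
  have hgmeas : Measurable g := by
    have : Measurable fun x => (⟨(g x : ℝ), (g x).2⟩ : unitInterval) :=
      hvalmeas.subtype_mk
    simpa using this
  -- the lifted measure
  refine ⟨(μ.map g).toSignedMeasure, fun A hA => ?_⟩
  have hApre : MeasurableSet (f ⁻¹' A) := hA.preimage hf.measurable
  rw [Measure.toSignedMeasure_apply_measurable hApre, measureReal_def, Measure.map_apply hgmeas hApre]
  have : g ⁻¹' (f ⁻¹' A) = A := by
    ext x
    simp [Set.mem_preimage, hfg x]
  rw [this]
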